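/- Let G be a connected, locally compact, second countable, unimodular topological group with Haar measure λ, U : G → U(H) a strongly continuous square integrable projective unitary representation (∫_G |⟨ψ, U(g)φ⟩|² dλ(g) = d > 0 for all unit vectors ψ, φ), and E : ℬ(G) → L(H) a covariant observable, i.e., U(g)*E(B)U(g) = E(g⁻¹B) for all g ∈ G, B ∈ ℬ(G). Suppose f : G → ℂ is measurable and D²(f,E) ⊆ D²(f(g·),E) for all g ∈ G, where f(g·) denotes the function h ↦ f(gh). Then U(g)D²(f,E) = D²(f,E) for all g ∈ G, and D²(f,E) is either {0} or a dense subspace of H. -/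

import Mathlib

open MeasureTheory Filter Topology ComplexConjugate
open scoped ENNReal NNReal

noncomputable section

local notation "⟪" x ", " y "⟫" => @inner ℂ _ _ x y

/-- The total variation measure of a complex measure. -/
def MeasureTheory.ComplexMeasure.tv {Ω : Type*} [MeasurableSpace Ω]
    (ν : MeasureTheory.ComplexMeasure Ω) : MeasureTheory.Measure Ω :=
  (MeasureTheory.ComplexMeasure.re ν).totalVariation +
    (MeasureTheory.ComplexMeasure.im ν).totalVariation

/-- `f` is integrable with respect to the complex measure `ν`: it is integrable with respect
to the total variation measure of `ν`. -/
def MeasureTheory.ComplexMeasure.CIntegrable {Ω : Type*} [MeasurableSpace Ω]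
    (ν : MeasureTheory.ComplexMeasure Ω) (f : Ω → ℂ) : Prop :=
  MeasureTheory.Integrable f ν.tv

/-- The integral of a complex function against a signed measure. -/
def MeasureTheory.SignedMeasure.cintegral {Ω : Type*} [MeasurableSpace Ω]
    (σ : MeasureTheory.SignedMeasure Ω) (f : Ω → ℂ) : ℂ :=
  (∫ x, f x ∂σ.toJordanDecomposition.posPart) - ∫ x, f x ∂σ.toJordanDecomposition.negPart

/-- The integral of a complex function against a complex measure. -/
def MeasureTheory.ComplexMeasure.cintegral {Ω : Type*} [MeasurableSpace Ω]
    (ν : MeasureTheory.ComplexMeasure Ω) (f : Ω → ℂ) : ℂ :=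
  (MeasureTheory.ComplexMeasure.re ν).cintegral f +
    Complex.I * (MeasureTheory.ComplexMeasure.im ν).cintegral f

/-- Total variation of a signed measure which is nonnegative on measurable sets. -/
lemma totalVariation_of_nonneg' {α : Type*} [MeasurableSpace α]
    (s : SignedMeasure α) (hs : ∀ B, MeasurableSet B → 0 ≤ s B) :
    ∀ B, MeasurableSet B → s.totalVariation B = ENNReal.ofReal (s B) := by
  have hres : (0 : VectorMeasure α ℝ) ≤[Set.univ] s := by
    refine (VectorMeasure.restrict_le_restrict_iff _ _ MeasurableSet.univ).2 ?_
    intro j hj _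
    simpa using hs j hj
  have hjd : s.toJordanDecomposition =
      ⟨s.toMeasureOfZeroLE Set.univ MeasurableSet.univ hres, 0,
        MeasureTheory.Measure.MutuallySingular.zero_right⟩ := by
    apply SignedMeasure.toJordanDecomposition_eq
    rw [JordanDecomposition.toSignedMeasure]
    simp only [Measure.toSignedMeasure_zero, sub_zero,
      SignedMeasure.toMeasureOfZeroLE_toSignedMeasure]
  intro B hB
  rw [SignedMeasure.totalVariation, hjd]
  simp only [Measure.add_apply, Measure.coe_zero, Pi.zero_apply, add_zero]
  rw [SignedMeasure.toMeasureOfZeroLE_apply _ _ _ hB, ENNReal.ofReal]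
  congr 1
  ext
  simp [Real.coe_toNNReal', hs B hB, Set.univ_inter]

/-- Let `G` be a connected, locally compact, second countable, unimodular
group with Haar measure `λ`, `U` a strongly continuous square integrable projective unitary
representation, and `E` a `U`-covariant observable. If `f : G → ℂ` is measurable and
`D²(f,E) ⊆ D²(f(g·),E)` for all `g`, then `U(g)D²(f,E) = D²(f,E)` for all `g`, and `D²(f,E)`
is either `{0}` or dense in `H`. -/
theorem stmt10 {G : Type*} [Group G] [TopologicalSpace G] [IsTopologicalGroup G]
    [LocallyCompactSpace G] [SecondCountableTopology G] [ConnectedSpace G]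
    [MeasurableSpace G] [BorelSpace G]
    (lam : Measure G) [lam.IsHaarMeasure] [lam.IsMulRightInvariant]
    {H : Type*} [NormedAddCommGroup H] [InnerProductSpace ℂ H] [CompleteSpace H]
    (U : G → H →L[ℂ] H)
    (hUiso : ∀ (g : G) (φ : H), ‖U g φ‖ = ‖φ‖)
    (hUsurj : ∀ g : G, Function.Surjective (U g))
    (c : G → G → ℂ) (hc : ∀ g h : G, ‖c g h‖ = 1)
    (hproj : ∀ g h : G, (U g).comp (U h) = c g h • U (g * h))
    (hUcont : ∀ φ : H, Continuous fun g => U g φ)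
    (d : ℝ) (hd : 0 < d)
    (hsq : ∀ ψ φ : H, ‖ψ‖ = 1 → ‖φ‖ = 1 → ∫ g, ‖⟪ψ, U g φ⟫‖ ^ 2 ∂lam = d)
    (E : Set G → H →L[ℂ] H)
    (hEpos : ∀ B : Set G, MeasurableSet B → (E B).IsPositive)
    (hEone : E Set.univ = 1)
    (ν : H → H → MeasureTheory.ComplexMeasure G)
    (hν : ∀ (ψ φ : H) (B : Set G), MeasurableSet B → ν ψ φ B = ⟪ψ, E B φ⟫)
    (hcov : ∀ (g : G) (B : Set G), MeasurableSet B →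
      ((ContinuousLinearMap.adjoint (U g)).comp ((E B).comp (U g))) =
        E ((fun h => g * h) ⁻¹' B))
    (f : G → ℂ) (hf : Measurable f)
    (hdom : ∀ g : G,
      {φ : H | Integrable (fun h => ‖f h‖ ^ 2) (ν φ φ).tv} ⊆
      {φ : H | Integrable (fun h => ‖f (g * h)‖ ^ 2) (ν φ φ).tv}) :
    (∀ g : G, (U g) '' {φ : H | Integrable (fun h => ‖f h‖ ^ 2) (ν φ φ).tv} =
        {φ : H | Integrable (fun h => ‖f h‖ ^ 2) (ν φ φ).tv}) ∧
    ({φ : H | Integrable (fun h => ‖f h‖ ^ 2) (ν φ φ).tv} = {0} ∨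
      Dense {φ : H | Integrable (fun h => ‖f h‖ ^ 2) (ν φ φ).tv}) := by
  -- positivity facts
  have hpos : ∀ (φ : H) (B : Set G), MeasurableSet B → 0 ≤ (⟪φ, E B φ⟫).re := by
    intro φ B hB
    have := (hEpos B hB).inner_nonneg_right φ
    exact (Complex.le_def.1 this).1
  have hreim : ∀ (φ : H) (B : Set G), MeasurableSet B →
      ⟪φ, E B φ⟫ = ((⟪φ, E B φ⟫).re : ℂ) := by
    intro φ B hB
    have hsa := (hEpos B hB).isSelfAdjoint
    have h1 : (starRingEnd ℂ) ⟪φ, E B φ⟫ = ⟪φ, E B φ⟫ := by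
      calc (starRingEnd ℂ) ⟪φ, (E B) φ⟫ = ⟪(E B) φ, φ⟫ := by rw [inner_conj_symm]
        _ = ⟪φ, (ContinuousLinearMap.adjoint (E B)) φ⟫ :=
            (ContinuousLinearMap.adjoint_inner_right _ _ _).symm
        _ = ⟪φ, E B φ⟫ := by rw [hsa.adjoint_eq]
    exact (Complex.conj_eq_iff_re.1 h1).symm
  -- total variation formula
  have htv : ∀ (φ : H) (B : Set G), MeasurableSet B →
      (ν φ φ).tv B = ENNReal.ofReal ((⟪φ, E B φ⟫).re) := by
    intro φ B hB
    have him : MeasureTheory.ComplexMeasure.im (ν φ φ) = 0 := by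
      ext i hi
      show ((ν φ φ) i).im = (0 : ℝ)
      rw [hν φ φ i hi, hreim φ i hi]
      simp
    have hre : ∀ i : Set G, MeasurableSet i →
        (MeasureTheory.ComplexMeasure.re (ν φ φ)) i = (⟪φ, E i φ⟫).re := by
      intro i hi
      show ((ν φ φ) i).re = _
      rw [hν φ φ i hi]
    rw [MeasureTheory.ComplexMeasure.tv, him, SignedMeasure.totalVariation_zero]
    simp only [Measure.add_apply, Measure.coe_zero, Pi.zero_apply, add_zero]
    rw [totalVariation_of_nonneg' _ (fun i hi => by rw [hre i hi]; exact hpos φ i hi) B hB,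
      hre B hB]
  -- the domain set
  set D : Set H := {φ : H | Integrable (fun h => ‖f h‖ ^ 2) (ν φ φ).tv} with hDdef
  have hmemD : ∀ φ : H, φ ∈ D ↔ Integrable (fun h => ‖f h‖ ^ 2) (ν φ φ).tv := fun φ =>
    Iff.rfl
  -- zero
  have h0 : (0 : H) ∈ D := by
    rw [hmemD]
    have : (ν (0 : H) 0).tv = 0 := by
      ext B hB
      rw [htv _ _ hB]
      simp
    rw [this]
    exact integrable_zero_measure
  -- scalar multiples
  have hsm : ∀ (a : ℂ) (φ : H), φ ∈ D → a • φ ∈ D := by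
    intro a φ hφ
    rw [hmemD] at hφ ⊢
    have heq : (ν (a • φ) (a • φ)).tv = ENNReal.ofReal (‖a‖ ^ 2) • (ν φ φ).tv := by
      ext B hB
      rw [htv _ _ hB, Measure.smul_apply, htv _ _ hB, smul_eq_mul,
        ← ENNReal.ofReal_mul (by positivity)]
      congr 1
      have h1 : ⟪a • φ, (E B) (a • φ)⟫ = ((‖a‖ ^ 2 : ℝ) : ℂ) * ⟪φ, E B φ⟫ := by
        rw [ContinuousLinearMap.map_smul, inner_smul_left, inner_smul_right, ← mul_assoc, RCLike.conj_mul]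
        norm_cast
      rw [h1, Complex.re_ofReal_mul]
    rw [heq]
    exact hφ.smul_measure ENNReal.ofReal_ne_top
  -- addition
  have hadd : ∀ φ ψ : H, φ ∈ D → ψ ∈ D → φ + ψ ∈ D := by
    intro φ ψ hφ hψ
    rw [hmemD] at hφ hψ ⊢
    have hle : (ν (φ + ψ) (φ + ψ)).tv ≤ (2 : ℝ≥0∞) • ((ν φ φ).tv + (ν ψ ψ).tv) := by
      refine Measure.le_iff.2 fun B hB => ?_
      rw [htv _ _ hB, Measure.smul_apply, Measure.add_apply, htv _ _ hB, htv _ _ hB,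
        smul_eq_mul]
      have key : (⟪φ + ψ, E B (φ + ψ)⟫).re ≤
          2 * ((⟪φ, E B φ⟫).re + (⟪ψ, E B ψ⟫).re) := by
        have e1 : 0 ≤ (⟪φ - ψ, E B (φ - ψ)⟫).re := by
          have := (hEpos B hB).inner_nonneg_right (φ - ψ)
          exact (Complex.le_def.1 this).1
        simp only [map_add, map_sub, inner_add_left, inner_add_right, inner_sub_left,
          inner_sub_right, Complex.add_re, Complex.sub_re] at e1 ⊢
        linarith
      calc ENNReal.ofReal (⟪φ + ψ, E B (φ + ψ)⟫).re
          ≤ ENNReal.ofReal (2 * ((⟪φ, E B φ⟫).re + (⟪ψ, E B ψ⟫).re)) :=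
            ENNReal.ofReal_le_ofReal key
        _ = 2 * (ENNReal.ofReal (⟪φ, E B φ⟫).re + ENNReal.ofReal (⟪ψ, E B ψ⟫).re) := by
            rw [ENNReal.ofReal_mul (by norm_num),
              ENNReal.ofReal_add (hpos φ B hB) (hpos ψ B hB)]
            norm_num
    exact (((hφ.add_measure hψ).smul_measure (by norm_num : (2 : ℝ≥0∞) ≠ ⊤)).mono_measure hle)
  -- U g maps D into D
  have hUD : ∀ (g : G) (φ : H), φ ∈ D → U g φ ∈ D := by
    intro g φ hφ
    rw [hmemD] at hφ ⊢
    have hmap : (ν (U g φ) (U g φ)).tv = Measure.map (fun h => g * h) (ν φ φ).tv := by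
      ext B hB
      rw [Measure.map_apply (measurable_const_mul g) hB, htv _ _ hB,
        htv _ _ (hB.preimage (measurable_const_mul g))]
      congr 2
      have h1 := congrArg (fun T : H →L[ℂ] H => ⟪φ, T φ⟫) (hcov g B hB)
      simp only [ContinuousLinearMap.comp_apply] at h1
      rw [ContinuousLinearMap.adjoint_inner_right] at h1
      exact h1
    rw [hmap, integrable_map_measure
      ((hf.norm.pow_const 2).aestronglyMeasurable)
      ((measurable_const_mul g).aemeasurable)]
    exact hdom g hφ
  -- structure of U(1) and U(g)U(g⁻¹)
  have hU1 : ∀ x : H, U 1 x = c 1 1 • x := by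
    intro x
    obtain ⟨y, rfl⟩ := hUsurj 1 x
    have h1 := congrArg (fun T : H →L[ℂ] H => T y) (hproj 1 1)
    simpa using h1
  have hUg : ∀ (g : G) (x : H), U g (U g⁻¹ x) = (c g g⁻¹ * c 1 1) • x := by
    intro g x
    have h1 := congrArg (fun T : H →L[ℂ] H => T x) (hproj g g⁻¹)
    simp only [ContinuousLinearMap.comp_apply, ContinuousLinearMap.smul_apply,
      mul_inv_cancel] at h1
    rw [h1, hU1, smul_smul]
  -- the submodule
  let K : Submodule ℂ H :=
    { carrier := D
      zero_mem' := h0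
      add_mem' := fun {x y} hx hy => hadd x y hx hy
      smul_mem' := fun a x hx => hsm a x hx }
  constructor
  · -- first part : U g '' D = D
    intro g
    apply Set.Subset.antisymm
    · rintro _ ⟨φ, hφ, rfl⟩
      exact hUD g φ hφ
    · intro φ hφ
      set a : ℂ := c g g⁻¹ * c 1 1 with ha
      have hanorm : ‖a‖ = 1 := by rw [ha, norm_mul, hc, hc, mul_one]
      have ha0 : a ≠ 0 := by
        intro h
        rw [h] at hanorm
        simp at hanorm
      refine ⟨U g⁻¹ (a⁻¹ • φ), hUD g⁻¹ _ (hsm a⁻¹ φ hφ), ?_⟩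
      rw [hUg, smul_smul, mul_inv_cancel₀ ha0, one_smul]
  · -- second part
    by_cases hD : D = {0}
    · exact Or.inl hD
    right
    have hex : ∃ φ0 ∈ D, φ0 ≠ (0 : H) := by
      by_contra h
      push_neg at h
      apply hD
      apply Set.Subset.antisymm
      · intro x hx
        simpa using h x hx
      · intro x hx
        rw [Set.mem_singleton_iff] at hx
        rw [hx]
        exact h0
    obtain ⟨φ0, hφ0D, hφ0⟩ := hex
    have horth : Kᗮ = ⊥ := by
      rw [Submodule.eq_bot_iff]
      intro ψ hψ
      by_contra hψ0
      set ψ1 : H := ((‖ψ‖ : ℂ))⁻¹ • ψ with hψ1def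
      set φ1 : H := ((‖φ0‖ : ℂ))⁻¹ • φ0 with hφ1def
      have hψ1 : ‖ψ1‖ = 1 := by
        rw [hψ1def, norm_smul, norm_inv, Complex.norm_real, norm_norm]
        exact inv_mul_cancel₀ (norm_ne_zero_iff.2 hψ0)
      have hφ1 : ‖φ1‖ = 1 := by
        rw [hφ1def, norm_smul, norm_inv, Complex.norm_real, norm_norm]
        exact inv_mul_cancel₀ (norm_ne_zero_iff.2 hφ0)
      have hφ1D : φ1 ∈ D := hsm _ _ hφ0D
      have hzero : ∀ g : G, ⟪ψ1, U g φ1⟫ = 0 := by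
        intro g
        have hmem : U g φ1 ∈ K := hUD g _ hφ1D
        have h1 : ⟪ψ, U g φ1⟫ = 0 := ((Submodule.mem_orthogonal' K ψ).1 hψ) _ hmem
        rw [hψ1def, inner_smul_left, h1, mul_zero]
      have hint := hsq ψ1 φ1 hψ1 hφ1
      rw [show (fun g => ‖⟪ψ1, U g φ1⟫‖ ^ 2) = fun _ : G => (0 : ℝ) from
        funext fun g => by rw [hzero g]; simp] at hint
      rw [integral_zero] at hint
      exact absurd hint hd.ne
    have htop : K.topologicalClosure = ⊤ := Submodule.topologicalClosure_eq_top_iff.2 horth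
    have : Dense (K : Set H) := Submodule.dense_iff_topologicalClosure_eq_top.2 htop
    exact this
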